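/- For every element w of the free group F_2 on two generators a, b, the element Pal(w) is a palindrome, i.e., ω(Pal(w)) = Pal(w), where ω is the unique anti-automorphism of F_2 fixing a and b (equivalently, ω(w) = ι(w⁻¹), where ι is the automorphism of F_2 sending a to a⁻¹ and b to b⁻¹). -/

import Mathlib

namespace PalWord

/-- The free group on two generators `a`, `b`. -/
abbrev F : Type := FreeGroup Bool

/-- The first generator `a` of the free group `F`. -/
def a : F := FreeGroup.of false

/-- The second generator `b` of the free group `F`. -/
def b : F := FreeGroup.of true

/-- The automorphism `R_a` of `F`, with `a ↦ a`, `b ↦ b a`. -/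
def Ra : MulAut F :=
  MonoidHom.toMulEquiv
    (FreeGroup.lift (fun x => if x then b * a else a))
    (FreeGroup.lift (fun x => if x then b * a⁻¹ else a))
    (by ext x; cases x <;> simp [a, b])
    (by ext x; cases x <;> simp [a, b])

/-- The automorphism `R_b` of `F`, with `a ↦ a b`, `b ↦ b`. -/
def Rb : MulAut F :=
  MonoidHom.toMulEquiv
    (FreeGroup.lift (fun x => if x then b else a * b))
    (FreeGroup.lift (fun x => if x then b else a * b⁻¹))
    (by ext x; cases x <;> simp [a, b])
    (by ext x; cases x <;> simp [a, b])

/-- The homomorphism `w ↦ R_w` from `F` to `Aut(F)`, sending `a` to `R_a` and `b` to `R_b`. -/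
def R : F →* MulAut F := FreeGroup.lift (fun x => if x then Rb else Ra)

/-- The palindromization map `Pal(w) = (a b)⁻¹ · R_w(a b)`. -/
def Pal (w : F) : F := (a * b)⁻¹ * R w (a * b)

/-- The automorphism `ι` of `F` with `a ↦ a⁻¹`, `b ↦ b⁻¹`. -/
def iota : MulAut F :=
  MonoidHom.toMulEquiv
    (FreeGroup.lift (fun x => (FreeGroup.of x)⁻¹))
    (FreeGroup.lift (fun x => (FreeGroup.of x)⁻¹))
    (by ext x; simp)
    (by ext x; simp)

/-- The mirror-image anti-automorphism `ω` of `F`: `ω(w) = ι(w⁻¹)`. -/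
def omega (w : F) : F := iota w⁻¹

lemma of_pure (c : Bool) : (pure c : F) = FreeGroup.of c := rfl
lemma omega_one : omega (1 : F) = 1 := by simp [omega]
lemma omega_of (c : Bool) : omega (FreeGroup.of c) = FreeGroup.of c := by
  simp [omega, iota]
lemma omega_mul (u v : F) : omega (u * v) = omega v * omega u := by
  simp [omega, mul_comm]
lemma omega_inv (x : F) : omega x⁻¹ = (omega x)⁻¹ := by
  simp [omega]
lemma omega_a : omega a = a := omega_of false
lemma omega_b : omega b = b := omega_of true

lemma R_of_false : R (FreeGroup.of false) = Ra := by simp [R]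
lemma R_of_true : R (FreeGroup.of true) = Rb := by simp [R]
lemma Ra_a : Ra a = a := by simp [Ra, a, b]
lemma Ra_b : Ra b = b * a := by simp [Ra, a, b]
lemma Rb_a : Rb a = a * b := by simp [Rb, a, b]
lemma Rb_b : Rb b = b := by simp [Rb, a, b]

lemma Rinv_R (w x : F) : R w⁻¹ (R w x) = x := by
  rw [← MulAut.mul_apply, ← map_mul, inv_mul_cancel, map_one, MulAut.one_apply]
lemma Rinv_R' (w x : F) : (R w)⁻¹ (R w x) = x := by
  rw [← MulAut.mul_apply, inv_mul_cancel, MulAut.one_apply]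

lemma conj_step (f : MulAut F) (g : F)
    (h : ∀ c : Bool, omega (f (FreeGroup.of c)) = g * f (omega (FreeGroup.of c)) * g⁻¹) :
    ∀ x : F, omega (f x) = g * f (omega x) * g⁻¹ := by
  intro x
  induction x using FreeGroup.induction_on with
  | C1 => simp [omega_one]
  | of c => exact h c
  | inv_of c ih =>
      rw [map_inv, omega_inv, ih, omega_inv, map_inv]; group
  | mul u v ihu ihv =>
      rw [map_mul, omega_mul, ihu, ihv, omega_mul, map_mul]; group

lemma conj_Ra : ∀ x : F, omega (Ra x) = a * Ra (omega x) * a⁻¹ := by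
  apply conj_step
  intro c
  cases c <;>
    simp only [omega_of, show (FreeGroup.of false : F) = a from rfl,
      show (FreeGroup.of true : F) = b from rfl, Ra_a, Ra_b, omega_mul, omega_a, omega_b] <;>
    group

lemma conj_Rb : ∀ x : F, omega (Rb x) = b * Rb (omega x) * b⁻¹ := by
  apply conj_step
  intro c
  cases c <;>
    simp only [omega_of, show (FreeGroup.of false : F) = a from rfl,
      show (FreeGroup.of true : F) = b from rfl, Rb_a, Rb_b, omega_mul, omega_a, omega_b] <;>
    group

lemma Pal_one : Pal (1 : F) = 1 := by simp [Pal, mul_assoc]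
lemma Pal_of_false : Pal (FreeGroup.of false) = a := by
  rw [Pal, R_of_false, map_mul, Ra_a, Ra_b]
  simp [mul_assoc]
lemma Pal_of_true : Pal (FreeGroup.of true) = b := by
  rw [Pal, R_of_true, map_mul, Rb_a, Rb_b]
  simp [mul_assoc]
lemma Pal_mul (u v : F) : Pal (u * v) = Pal u * R u (Pal v) := by
  simp only [Pal, map_mul, map_inv, MulAut.mul_apply]
  group
lemma Pal_inv (w : F) : Pal w⁻¹ = (R w⁻¹ (Pal w))⁻¹ := by
  rw [Pal, Pal, map_mul (R w⁻¹) ((a*b)⁻¹) (R w (a*b)), Rinv_R, map_inv (R w⁻¹) (a*b), mul_inv_rev]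
  group

lemma key (w : F) : ∀ x : F, omega (R w x) = Pal w * R w (omega x) * (Pal w)⁻¹ := by
  induction w using FreeGroup.induction_on with
  | C1 => intro x; simp [Pal_one]
  | of c =>
      cases c
      · intro x; rw [R_of_false, Pal_of_false]; exact conj_Ra x
      · intro x; rw [R_of_true, Pal_of_true]; exact conj_Rb x
  | inv_of c ih =>
      intro x
      have h := ih (R (FreeGroup.of c)⁻¹ x)
      rw [← MulAut.mul_apply, ← map_mul, mul_inv_cancel, map_one, MulAut.one_apply] at h
      have h2 : R (FreeGroup.of c) (omega (R (FreeGroup.of c)⁻¹ x))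
          = (Pal (FreeGroup.of c))⁻¹ * omega x * Pal (FreeGroup.of c) := by
        rw [h]; group
      have h3 := congrArg (R (FreeGroup.of c)⁻¹) h2
      rw [Rinv_R] at h3
      rw [h3, Pal_inv, map_mul, map_mul, map_inv]
      group
  | mul u v ihu ihv =>
      intro x
      rw [show R (u*v) = R u * R v from map_mul R u v, MulAut.mul_apply, ihu, ihv, Pal_mul,
        MulAut.mul_apply, map_mul, map_mul, map_inv]
      group

lemma comm_fixed (w : F) : R w (b * a * (a * b)⁻¹) = b * a * (a * b)⁻¹ := by
  induction w using FreeGroup.induction_on with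
  | C1 => simp
  | of c =>
      cases c <;>
        simp only [R_of_false, R_of_true, map_mul, map_inv, Ra_a, Ra_b, Rb_a, Rb_b] <;> group
  | inv_of c ih =>
      have := congrArg (R (FreeGroup.of c)⁻¹) ih
      rw [Rinv_R] at this
      exact this.symm
  | mul u v ihu ihv =>
      rw [show R (u*v) = R u * R v from map_mul R u v, MulAut.mul_apply, ihv, ihu]

/-- Every `Pal(w)` is a palindrome: it is fixed by the mirror-image
anti-automorphism `ω` of `F₂`. -/
theorem Pal_palindrome (w : F) : omega (Pal w) = Pal w := by
  have hc := comm_fixed w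
  rw [map_mul (R w) (b*a) ((a*b)⁻¹), map_inv (R w) (a*b)] at hc
  have hba : R w (b * a) = b * a * (a*b)⁻¹ * R w (a * b) := by
    rw [← hc]; group
  calc omega (Pal w) = omega (R w (a*b)) * omega ((a*b)⁻¹) := by
        rw [Pal, omega_mul]
    _ = Pal w * R w (b * a) * (Pal w)⁻¹ * (b*a)⁻¹ := by
        rw [key w (a*b), omega_inv, omega_mul, omega_a, omega_b, mul_assoc]
    _ = Pal w * (b * a * (a*b)⁻¹ * R w (a*b)) * (Pal w)⁻¹ * (b*a)⁻¹ := by rw [hba]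
    _ = Pal w := by rw [Pal]; group

end PalWord
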